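/- arXiv:2211.04267 — 2 statements merged into one kernel-verified Lean document; each statement's English description precedes it below -/
import Mathlib

section
/- In a quantity space Q over a field K, each dimension (equivalence class under x ∼ y ⟺ ∃ nonzero α, β ∈ K with α·x = β·y) containing an invertible element u is a one-dimensional K-vector space: for every x in the class there is a unique scalar μ ∈ K with x = μ · u. -/
/-- In a quantity space over a field `K`, each dimension containing an invertible
element `u` is a one-dimensional `K`-vector space: every `x` equivalent to `u`
equals `μ · u` for a unique scalar `μ`. -/
theorem quantity_space_dimension_one_dimensional
    {K Q : Type*} [Field K] [CommMonoid Q] (smul : K → Q → Q)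
    (h_one : ∀ x : Q, smul 1 x = x)
    (h_mul : ∀ (α β : K) (x : Q), smul α (smul β x) = smul (α * β) x)
    (h_left : ∀ (α : K) (x y : Q), smul α (x * y) = smul α x * y)
    {m : ℕ} (e : Fin m → Qˣ) (μ : Q → K) (kk : Q → Fin m → ℤ)
    (h_exp : ∀ x : Q, x = smul (μ x) ↑(∏ j, e j ^ kk x j))
    (h_uniq : ∀ (x : Q) (c : K) (z : Fin m → ℤ),
      x = smul c ↑(∏ j, e j ^ z j) → c = μ x ∧ z = kk x)
    (u : Q) (hu : IsUnit u) :
    ∀ x : Q, (∃ α β : K, α ≠ 0 ∧ β ≠ 0 ∧ smul α x = smul β u) →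
      ∃! c : K, x = smul c u := by
  -- First: μ u ≠ 0
  have hμ1 : μ (1 : Q) = 1 := by
    have h2 : (1 : Q) = smul 1 ↑(∏ j, e j ^ (fun _ : Fin m => (0:ℤ)) j) := by
      simp [h_one]
    exact ((h_uniq 1 1 _ h2).1).symm
  have hμu : μ u ≠ 0 := by
    intro h0
    obtain ⟨w, hw⟩ := hu
    have hu' := h_exp u
    rw [h0] at hu'
    set E : Q := ↑(∏ j, e j ^ kk u j) with hE
    have h1 : (1 : Q) = smul 0 (E * ↑w⁻¹) := by
      calc (1 : Q) = u * ↑w⁻¹ := by rw [← hw]; exact (w.mul_inv).symm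
        _ = smul 0 E * ↑w⁻¹ := by rw [← hu']
        _ = smul 0 (E * ↑w⁻¹) := (h_left 0 E ↑w⁻¹).symm
    have hy := h_exp (E * ↑w⁻¹)
    rw [hy, h_mul, zero_mul] at h1
    have := (h_uniq 1 0 _ h1).1
    rw [hμ1] at this
    exact zero_ne_one this
  intro x ⟨α, β, hα, hβ, hrel⟩
  -- relate representations of x and u
  have hx := h_exp x
  have hu' := h_exp u
  have hwx : smul α x = smul (α * μ x) ↑(∏ j, e j ^ kk x j) := by
    rw [hx, h_mul]; rw [← hx]
  have hwu : smul α x = smul (β * μ u) ↑(∏ j, e j ^ kk u j) := by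
    rw [hrel, hu', h_mul]; rw [← hu']
  obtain ⟨hc1, hk1⟩ := h_uniq _ _ _ hwx
  obtain ⟨hc2, hk2⟩ := h_uniq _ _ _ hwu
  have hkk : kk x = kk u := hk1.trans hk2.symm
  have hαβ : α * μ x = β * μ u := hc1.trans hc2.symm
  have key : ∀ c : K, (x = smul c u) ↔ c * μ u = μ x := by
    intro c
    constructor
    · intro h
      rw [hu', h_mul] at h
      exact (h_uniq x _ _ h).1
    · intro h
      rw [hu', h_mul, h, ← hkk, ← hx]
  refine ⟨μ x * (μ u)⁻¹, (key _).mpr ?_, ?_⟩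
  · field_simp
  · intro c' hc'
    rw [key] at hc'
    field_simp [← hc']
    exact hc'
end

section
/- Let Q be a quantity space over a field K, let C be a dimension with C ≠ [1_Q], and for a fixed invertible u ∈ C define Φ_u : C → [1_Q] by Φ_u(λ · u) = λ · 1_Q. Then Φ_u is a complete quantity function (any nonzero e ∈ C is a local basis) but Φ_u has no covariant scalar representation: there is no function φ : K → K such that μ_E(Φ_u(q)) = φ(μ_E(q)) for every one-element local basis E = {e} with e ∈ C nonzero and every q ∈ C. -/
/-- In a quantity space over a field `K` with at least three elements, the complete
quantity function `Φ_u : C → [1_Q]`, `Φ_u(λ · u) = λ · 1_Q` (for a fixed invertible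
`u` in a dimension `C ≠ [1_Q]`), has no covariant scalar representation: there is no
`φ : K → K` with `μ_E(Φ_u(q)) = φ(μ_E(q))` for every one-element local basis
`E = {e}` (`e` a nonzero element of `C`) and every `q ∈ C`. -/
theorem no_covariant_scalar_representation
    {K Q : Type*} [Field K] [CommMonoid Q] (smul : K → Q → Q)
    (h_one : ∀ x : Q, smul 1 x = x)
    (h_mul : ∀ (α β : K) (x : Q), smul α (smul β x) = smul (α * β) x)
    (h_left : ∀ (α : K) (x y : Q), smul α (x * y) = smul α x * y)
    (hK : ∃ γ : K, γ ≠ 0 ∧ γ ≠ 1)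
    (u : Q) (hu : IsUnit u)
    (hC : ¬ ∃ α β : K, α ≠ 0 ∧ β ≠ 0 ∧ smul α u = smul β 1)
    (h1reg : ∀ a b : K, smul a (1 : Q) = smul b 1 → a = b)
    (Φ : Q → Q) (hΦ : ∀ lam : K, Φ (smul lam u) = smul lam 1) :
    ¬ ∃ φ : K → K, ∀ e : Q, IsUnit e →
      (∃ α β : K, α ≠ 0 ∧ β ≠ 0 ∧ smul α e = smul β u) →
      ∀ (q : Q) (c : K), q = smul c e → Φ q = smul (φ c) 1 := by
  rintro ⟨φ, hφ⟩
  obtain ⟨γ, hγ0, hγ1⟩ := hK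
  -- Step 1: φ is the identity, using the basis e = u.
  have hid : ∀ c : K, φ c = c := by
    intro c
    have h := hφ u hu ⟨1, 1, one_ne_zero, one_ne_zero, rfl⟩ (smul c u) c rfl
    rw [hΦ c] at h
    exact (h1reg _ _ h.symm)
  -- Step 2: e = smul γ u is a unit.
  have hunit : IsUnit (smul γ u) := by
    have h1 : smul γ u = smul γ (1 : Q) * u := by
      conv_lhs => rw [← one_mul u, h_left]
    have h2 : IsUnit (smul γ (1 : Q)) := by
      refine IsUnit.of_mul_eq_one (a := smul γ (1 : Q)) (smul γ⁻¹ (1 : Q)) ?_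
      rw [← h_left, one_mul, h_mul, mul_inv_cancel₀ hγ0, h_one]
    rw [h1]
    exact h2.mul hu
  -- Step 3: apply hφ with e = smul γ u, q = smul 1 u, c = γ⁻¹.
  have hq : smul (1 : K) u = smul γ⁻¹ (smul γ u) := by
    rw [h_mul, inv_mul_cancel₀ hγ0]
  have h := hφ (smul γ u) hunit ⟨1, γ, one_ne_zero, hγ0, by rw [h_one]⟩
      (smul 1 u) γ⁻¹ hq
  rw [hΦ 1, hid] at h
  have := h1reg _ _ h
  exact hγ1 (by field_simp at this ⊢; exact this)
end
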